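/- Let (r_0, …, r_h) be a free sequence of positive integers, Γ = ⟨r_0,…,r_h⟩, and N = (Σ_{k=1}^h (e_k − 1) r_k) − r_0 ∈ ℤ. Then Γ is symmetric: for every integer z, z ∈ Γ if and only if N − z ∉ Γ (where Γ ⊆ ℕ is viewed as a subset of ℤ). -/

import Mathlib

/-- A sequence `r 0, …, r h` of positive integers, together with the chain of gcds
`d 1 = r 0`, `d (k+1) = gcd (d k) (r k)`, is *free* if `d (h+1) = 1` (so the `r k` are
coprime) and `e_k · r_k ∈ ⟨r_0, …, r_{k−1}⟩` for all `1 ≤ k ≤ h`, where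
`e k = d k / d (k+1)`. -/
def IsFreeSeq (h : ℕ) (r d : ℕ → ℕ) : Prop :=
  (∀ k ≤ h, 0 < r k) ∧
  d 1 = r 0 ∧
  (∀ k, 1 ≤ k → k ≤ h → d (k + 1) = Nat.gcd (d k) (r k)) ∧
  d (h + 1) = 1 ∧
  ∀ k, 1 ≤ k → k ≤ h →
    (d k / d (k + 1)) * r k ∈ AddSubmonoid.closure (r '' Set.Iio k)

open Finset

variable {h : ℕ} {r d : ℕ → ℕ}

lemma d_pos (hf : IsFreeSeq h r d) : ∀ k, 1 ≤ k → k ≤ h + 1 → 0 < d k := by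
  intro k hk1 hk2
  induction k with
  | zero => omega
  | succ n ih =>
    rcases Nat.eq_or_lt_of_le hk1 with h1 | h1
    · rw [← h1, hf.2.1]
      exact hf.1 0 (Nat.zero_le _)
    · have hn1 : 1 ≤ n := by omega
      have hn2 : n ≤ h := by omega
      rw [hf.2.2.1 n hn1 hn2]
      exact Nat.gcd_pos_of_pos_right _ (hf.1 n hn2)

lemma d_dvd (hf : IsFreeSeq h r d) : ∀ j k, 1 ≤ j → j ≤ k → k ≤ h + 1 → d k ∣ d j := by
  intro j k hj hjk hkh
  induction k with
  | zero => omega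
  | succ n ih =>
    rcases Nat.eq_or_lt_of_le hjk with h1 | h1
    · rw [h1]
    · have hn1 : 1 ≤ n := by omega
      have hn2 : n ≤ h := by omega
      have : d (n+1) ∣ d n := by rw [hf.2.2.1 n hn1 hn2]; exact Nat.gcd_dvd_left _ _
      exact dvd_trans this (ih (by omega) (by omega))

lemma d_dvd_r (hf : IsFreeSeq h r d) : ∀ k j, k ≤ h + 1 → j < k → d k ∣ r j := by
  intro k j hk hjk
  rcases Nat.eq_zero_or_pos j with rfl | hj
  · exact hf.2.1 ▸ d_dvd hf 1 k (le_refl _) (by omega) hk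
  · have : d (j+1) ∣ r j := by
      rw [hf.2.2.1 j hj (by omega)]; exact Nat.gcd_dvd_right _ _
    exact dvd_trans (d_dvd hf (j+1) k (by omega) (by omega) hk) this

lemma e_pos (hf : IsFreeSeq h r d) : ∀ k, 1 ≤ k → k ≤ h → 0 < d k / d (k+1) := by
  intro k hk1 hk2
  have hdvd : d (k+1) ∣ d k := by
    rw [hf.2.2.1 k hk1 hk2]; exact Nat.gcd_dvd_left _ _
  exact Nat.div_pos (Nat.le_of_dvd (d_pos hf k hk1 (by omega)) hdvd)
    (d_pos hf (k+1) (by omega) (by omega))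

lemma sum_split {M : Type*} [AddCommMonoid M] (m h : ℕ) (hm : m ≤ h) (f : ℕ → M) :
    ∑ j ∈ range (h+1), f j =
      (∑ j ∈ range m, f j) + f m + ∑ j ∈ Icc (m+1) h, f j := by
  rw [range_eq_Ico, ← Finset.sum_Ico_consecutive f (Nat.zero_le m) (by omega : m ≤ h + 1),
    Finset.sum_eq_sum_Ico_succ_bot (by omega : m < h + 1), ← Finset.Ico_add_one_right_eq_Icc (m+1) h,
    ← range_eq_Ico, add_assoc]

lemma sum_split0 {M : Type*} [AddCommMonoid M] (h : ℕ) (f : ℕ → M) :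
    ∑ j ∈ range (h+1), f j = f 0 + ∑ j ∈ Icc 1 h, f j := by
  have := sum_split 0 h (Nat.zero_le h) f
  simpa using this

lemma exists_coeff (e ρ : ℕ) (he : 0 < e) (hco : Nat.Coprime e ρ) (w : ℤ) :
    ∃ t : ℕ, t < e ∧ (e:ℤ) ∣ w - t * ρ := by
  have hco' : IsCoprime (ρ:ℤ) (e:ℤ) := by
    rw [Int.isCoprime_iff_gcd_eq_one, Int.gcd_natCast_natCast]
    exact hco.symm
  obtain ⟨u, v, huv⟩ := hco'
  refine ⟨((w * u) % e).toNat, ?_, ?_⟩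
  · have h1 : 0 ≤ (w * u) % e := Int.emod_nonneg _ (by exact_mod_cast he.ne')
    have h2 : (w * u) % e < e := Int.emod_lt_of_pos _ (by exact_mod_cast he)
    omega
  · have h1 : 0 ≤ (w * u) % e := Int.emod_nonneg _ (by exact_mod_cast he.ne')
    rw [Int.toNat_of_nonneg h1]
    have h3 : (e:ℤ) ∣ (w * u) % e - w * u := by
      rw [Int.emod_def]; ring_nf
      exact ⟨-(w * u / e), by ring⟩
    have h4 : w - ((w * u) % e) * ρ
        = -(((w * u) % e - w * u) * ρ) + w * (1 - u * ρ) := by ring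
    rw [h4]
    refine dvd_add (dvd_neg.mpr (Dvd.dvd.mul_right h3 ρ)) ?_
    have : 1 - u * ρ = v * e := by linarith [huv]
    rw [this]
    exact ⟨w * v, by ring⟩

/-- decomposition facts at index k -/
lemma step_facts (hf : IsFreeSeq h r d) (k : ℕ) (hk1 : 1 ≤ k) (hk2 : k ≤ h) :
    (d k : ℤ) = (d (k+1) : ℤ) * (d k / d (k+1) : ℕ) ∧
    (r k : ℤ) = (d (k+1) : ℤ) * (r k / d (k+1) : ℕ) ∧
    Nat.Coprime (d k / d (k+1)) (r k / d (k+1)) := by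
  have hg := hf.2.2.1 k hk1 hk2
  have hd1 : d (k+1) ∣ d k := hg ▸ Nat.gcd_dvd_left _ _
  have hd2 : d (k+1) ∣ r k := hg ▸ Nat.gcd_dvd_right _ _
  have hgpos : 0 < d (k+1) := d_pos hf (k+1) (by omega) (by omega)
  refine ⟨?_, ?_, ?_⟩
  · exact_mod_cast (Nat.mul_div_cancel' hd1).symm
  · exact_mod_cast (Nat.mul_div_cancel' hd2).symm
  · have := Nat.coprime_div_gcd_div_gcd (m := d k) (n := r k) (hg ▸ hgpos)
    rwa [← hg] at this

lemma inj_lemma (hf : IsFreeSeq h r d) : ∀ m, m ≤ h → ∀ a b : ℕ → ℕ,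
    (∀ k ∈ Icc 1 m, a k < d k / d (k+1)) → (∀ k ∈ Icc 1 m, b k < d k / d (k+1)) →
    ((d 1 : ℤ) ∣ ∑ k ∈ Icc 1 m, ((a k : ℤ) - b k) * r k) →
    ∀ k ∈ Icc 1 m, a k = b k := by
  intro m
  induction m with
  | zero => intro _ a b _ _ _ k hk; simp at hk
  | succ n ih =>
    intro hm a b ha hb hdvd k hk
    -- first, a (n+1) = b (n+1)
    have hsum : ∑ k ∈ Icc 1 (n+1), ((a k : ℤ) - b k) * r k
        = (∑ k ∈ Icc 1 n, ((a k : ℤ) - b k) * r k) + ((a (n+1) : ℤ) - b (n+1)) * r (n+1) :=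
      Finset.sum_Icc_succ_top (by omega) _
    obtain ⟨hD, hR, hcop⟩ := step_facts hf (n+1) (by omega) hm
    set g := d (n+2) with hgdef
    set e := d (n+1) / d (n+2) with hedef
    set ρ := r (n+1) / d (n+2) with hrdef
    have hDd1 : (d (n+1) : ℤ) ∣ (d 1 : ℤ) :=
      Int.natCast_dvd_natCast.mpr (d_dvd hf 1 (n+1) le_rfl (by omega) (by omega))
    have hDsum : (d (n+1) : ℤ) ∣ ∑ k ∈ Icc 1 n, ((a k : ℤ) - b k) * r k := by
      refine Finset.dvd_sum (fun k hk => ?_)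
      have hk' := Finset.mem_Icc.mp hk
      exact Dvd.dvd.mul_left
        (Int.natCast_dvd_natCast.mpr (d_dvd_r hf (n+1) k (by omega) (by omega))) _
    have htop : (d (n+1) : ℤ) ∣ ((a (n+1) : ℤ) - b (n+1)) * r (n+1) := by
      have h1 : (d (n+1) : ℤ) ∣ ∑ k ∈ Icc 1 (n+1), ((a k : ℤ) - b k) * r k :=
        dvd_trans hDd1 hdvd
      rw [hsum] at h1
      exact (dvd_add_right hDsum).mp h1
    have heq : a (n+1) = b (n+1) := by
      rw [hD, hR] at htop
      have hgpos : (0:ℤ) < g := by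
        exact_mod_cast d_pos hf (n+2) (by omega) (by omega)
      have h2 : (e:ℤ) ∣ ((a (n+1) : ℤ) - b (n+1)) * ρ := by
        rcases htop with ⟨c, hc⟩
        refine ⟨c, ?_⟩
        have : (g:ℤ) * (((a (n+1) : ℤ) - b (n+1)) * ρ) = (g:ℤ) * ((e:ℤ) * c) := by
          rw [← mul_assoc (g:ℤ) (e:ℤ) c, ← hc]; ring
        exact mul_left_cancel₀ (by positivity) this
      have hco' : IsCoprime (e:ℤ) (ρ:ℤ) := by
        rw [Int.isCoprime_iff_gcd_eq_one, Int.gcd_natCast_natCast]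
        exact hcop
      have h3 : (e:ℤ) ∣ ((a (n+1) : ℤ) - b (n+1)) := hco'.dvd_of_dvd_mul_right h2
      have ha' := ha (n+1) (Finset.mem_Icc.mpr ⟨by omega, le_rfl⟩)
      have hb' := hb (n+1) (Finset.mem_Icc.mpr ⟨by omega, le_rfl⟩)
      have hae : a (n+1) < e := ha'
      have hbe : b (n+1) < e := hb'
      have : (a (n+1) : ℤ) - b (n+1) = 0 := by
        refine Int.eq_zero_of_abs_lt_dvd h3 ?_
        rw [abs_lt]
        constructor <;> push_cast <;> omega
      omega
    rcases Finset.mem_Icc.mp hk with ⟨hk1, hk2⟩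
    rcases Nat.eq_or_lt_of_le hk2 with h1 | h1
    · rw [h1]; exact heq
    · have hrest : (d 1 : ℤ) ∣ ∑ k ∈ Icc 1 n, ((a k : ℤ) - b k) * r k := by
        rw [hsum] at hdvd
        have : ((a (n+1) : ℤ) - b (n+1)) = 0 := by rw [heq]; ring
        rw [this, zero_mul, add_zero] at hdvd
        exact hdvd
      exact ih (by omega) a b
        (fun k hk => ha k (Finset.mem_Icc.mp hk |> fun ⟨x,y⟩ => Finset.mem_Icc.mpr ⟨x, by omega⟩))
        (fun k hk => hb k (Finset.mem_Icc.mp hk |> fun ⟨x,y⟩ => Finset.mem_Icc.mpr ⟨x, by omega⟩))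
        hrest k (Finset.mem_Icc.mpr ⟨hk1, by omega⟩)

lemma surj_lemma (hf : IsFreeSeq h r d) : ∀ m, m ≤ h → ∀ z : ℤ, ((d (m+1) : ℤ) ∣ z) →
    ∃ a : ℕ → ℕ, (∀ k ∈ Icc 1 m, a k < d k / d (k+1)) ∧
      (d 1 : ℤ) ∣ (z - ∑ k ∈ Icc 1 m, (a k : ℤ) * r k) := by
  intro m
  induction m with
  | zero =>
    intro _ z hz
    exact ⟨0, by simp, by simpa using hz⟩
  | succ n ih =>
    intro hm z hz
    obtain ⟨hD, hR, hcop⟩ := step_facts hf (n+1) (by omega) hm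
    set g := d (n+2) with hgdef
    set e := d (n+1) / d (n+2) with hedef
    set ρ := r (n+1) / d (n+2) with hrdef
    have hgpos : 0 < g := d_pos hf (n+2) (by omega) (by omega)
    have hepos : 0 < e := e_pos hf (n+1) (by omega) hm
    obtain ⟨w, hw⟩ := hz
    obtain ⟨t, ht, htdvd⟩ := exists_coeff e ρ hepos hcop w
    -- d (n+1) ∣ z - t * r (n+1)
    have hstep : (d (n+1) : ℤ) ∣ z - (t:ℤ) * r (n+1) := by
      rw [hD, hR, hw]
      obtain ⟨c, hc⟩ := htdvd
      exact ⟨c, by rw [mul_assoc]; rw [← hc]; ring⟩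
    obtain ⟨a, ha, hadvd⟩ := ih (by omega) (z - (t:ℤ) * r (n+1)) hstep
    refine ⟨fun k => if k = n+1 then t else a k, ?_, ?_⟩
    · intro k hk
      rcases Finset.mem_Icc.mp hk with ⟨hk1, hk2⟩
      by_cases hkn : k = n+1
      · subst hkn; simpa using ht
      · simp only [hkn, if_false]
        exact ha k (Finset.mem_Icc.mpr ⟨hk1, by omega⟩)
    · have hsum : ∑ k ∈ Icc 1 (n+1), ((if k = n+1 then t else a k : ℕ) : ℤ) * r k
          = (∑ k ∈ Icc 1 n, (a k : ℤ) * r k) + (t:ℤ) * r (n+1) := by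
        rw [Finset.sum_Icc_succ_top (by omega : 1 ≤ n + 1)]
        simp only [if_pos rfl]
        congr 1
        refine Finset.sum_congr rfl (fun k hk => ?_)
        have hk' := Finset.mem_Icc.mp hk
        rw [if_neg (by omega)]
      rw [hsum]
      have : z - (∑ k ∈ Icc 1 n, (a k : ℤ) * r k + (t:ℤ) * r (n+1))
          = (z - (t:ℤ) * r (n+1)) - ∑ k ∈ Icc 1 n, (a k : ℤ) * r k := by ring
      rw [this]
      exact hadvd

lemma closure_iio_iff (r : ℕ → ℕ) (n : ℕ) (v : ℕ) :
    v ∈ AddSubmonoid.closure (r '' Set.Iio n) ↔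
      ∃ c : ℕ → ℕ, v = ∑ j ∈ Finset.range n, c j * r j := by
  constructor
  · intro hv
    induction hv using AddSubmonoid.closure_induction with
    | mem x hx =>
      obtain ⟨j, hj, rfl⟩ := hx
      refine ⟨fun i => if i = j then 1 else 0, ?_⟩
      rw [Finset.sum_eq_single j]
      · simp
      · intro b _ hb; simp [hb]
      · intro hj'; exact absurd (Finset.mem_range.mpr hj) hj'
    | zero => exact ⟨0, by simp⟩
    | add x y hx hy ihx ihy =>
      obtain ⟨c1, rfl⟩ := ihx
      obtain ⟨c2, rfl⟩ := ihy
      exact ⟨c1 + c2, by simp [Finset.sum_add_distrib, add_mul]⟩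
  · rintro ⟨c, rfl⟩
    refine AddSubmonoid.sum_mem _ (fun j hj => ?_)
    have : r j ∈ AddSubmonoid.closure (r '' Set.Iio n) :=
      AddSubmonoid.subset_closure ⟨j, Finset.mem_range.mp hj, rfl⟩
    simpa [nsmul_eq_mul] using AddSubmonoid.nsmul_mem _ this (c j)

lemma norm_lemma (hf : IsFreeSeq h r d) : ∀ t, t ≤ h → ∀ c : ℕ → ℕ, ∃ a : ℕ → ℕ,
    (∀ k ∈ Icc 1 h, h + 1 - t ≤ k → a k < d k / d (k+1)) ∧
    ∑ j ∈ range (h+1), a j * r j = ∑ j ∈ range (h+1), c j * r j := by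
  intro t
  induction t with
  | zero =>
    intro _ c
    refine ⟨c, fun k hk hk' => ?_, rfl⟩
    have := Finset.mem_Icc.mp hk
    omega
  | succ t ih =>
    intro ht c
    obtain ⟨b, hb, hbsum⟩ := ih (by omega) c
    set m := h - t with hmdef
    have hm1 : 1 ≤ m := by omega
    have hm2 : m ≤ h := by omega
    have hmt : h + 1 - t = m + 1 := by omega
    have hmt' : h + 1 - (t+1) = m := by omega
    set e := d m / d (m+1) with hedef
    have hepos : 0 < e := e_pos hf m hm1 hm2
    obtain ⟨w, hw⟩ := (closure_iio_iff r m _).mp (hf.2.2.2.2 m hm1 hm2)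
    set q := b m / e with hqdef
    set s := b m % e with hsdef
    have hbm : b m = q * e + s := by
      rw [hqdef, hsdef, mul_comm]; exact (Nat.div_add_mod (b m) e).symm
    refine ⟨fun k => if k < m then b k + q * w k else if k = m then s else b k, ?_, ?_⟩
    · intro k hk hk'
      beta_reduce
      rw [hmt'] at hk'
      rcases Nat.eq_or_lt_of_le hk' with h1 | h1
      · rw [if_neg (by omega), if_pos h1.symm]
        rw [← h1]
        exact Nat.mod_lt _ hepos
      · rw [if_neg (by omega), if_neg (by omega)]
        exact hb k hk (by omega)
    · rw [← hbsum]
      rw [sum_split m h hm2, sum_split m h hm2]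
      have h1 : ∑ j ∈ range m, (if j < m then b j + q * w j else if j = m then s else b j) * r j
          = (∑ j ∈ range m, b j * r j) + q * (e * r m) := by
        rw [hw, Finset.mul_sum, ← Finset.sum_add_distrib]
        refine Finset.sum_congr rfl (fun j hj => ?_)
        rw [if_pos (Finset.mem_range.mp hj)]
        ring
      have h2 : (if m < m then b m + q * w m else if m = m then s else b m) = s := by
        rw [if_neg (lt_irrefl m), if_pos rfl]
      have h3 : ∑ j ∈ Icc (m+1) h, (if j < m then b j + q * w j else if j = m then s else b j) * r j
          = ∑ j ∈ Icc (m+1) h, b j * r j := by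
        refine Finset.sum_congr rfl (fun j hj => ?_)
        have := Finset.mem_Icc.mp hj
        rw [if_neg (by omega), if_neg (by omega)]
      simp only [h1, h3]
      rw [if_neg (lt_irrefl m), if_pos trivial, hbm]
      ring

lemma iic_eq_iio (h : ℕ) : Set.Iic h = Set.Iio (h+1) := by
  ext x; simp [Nat.lt_succ_iff]

lemma mem_iff (hf : IsFreeSeq h r d) (a : ℕ → ℕ)
    (ha : ∀ k ∈ Icc 1 h, a k < d k / d (k+1)) (q : ℤ) :
    (∃ v ∈ AddSubmonoid.closure (r '' Set.Iic h),
        (v : ℤ) = q * r 0 + ∑ k ∈ Icc 1 h, (a k : ℤ) * r k) ↔ 0 ≤ q := by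
  have hr0 : 0 < r 0 := hf.1 0 (Nat.zero_le _)
  constructor
  · rintro ⟨v, hv, hveq⟩
    rw [iic_eq_iio] at hv
    obtain ⟨c, rfl⟩ := (closure_iio_iff r (h+1) v).mp hv
    obtain ⟨a', ha', hsum⟩ := norm_lemma hf h le_rfl c
    have ha'' : ∀ k ∈ Icc 1 h, a' k < d k / d (k+1) := by
      intro k hk
      exact ha' k hk (by have := Finset.mem_Icc.mp hk; omega)
    have hcast : ((∑ j ∈ range (h+1), c j * r j : ℕ) : ℤ)
        = (a' 0 : ℤ) * r 0 + ∑ k ∈ Icc 1 h, (a' k : ℤ) * r k := by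
      rw [← hsum, sum_split0 h (fun j => a' j * r j)]
      push_cast
      ring
    rw [hcast] at hveq
    have e1 : ∑ k ∈ Icc 1 h, ((a k : ℤ) - a' k) * r k
        = (∑ k ∈ Icc 1 h, (a k : ℤ) * r k) - ∑ k ∈ Icc 1 h, (a' k : ℤ) * r k := by
      rw [← Finset.sum_sub_distrib]
      exact Finset.sum_congr rfl (fun k _ => by ring)
    have hdvd : (d 1 : ℤ) ∣ ∑ k ∈ Icc 1 h, ((a k : ℤ) - a' k) * r k := by
      have e2 : ∑ k ∈ Icc 1 h, ((a k : ℤ) - a' k) * r k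
          = ((a' 0 : ℤ) - q) * r 0 := by
        rw [e1]; linear_combination -hveq
      rw [e2, hf.2.1]
      exact dvd_mul_left _ _
    have heqk := inj_lemma hf h le_rfl a a' ha ha'' hdvd
    have hSS : ∑ k ∈ Icc 1 h, (a k : ℤ) * r k = ∑ k ∈ Icc 1 h, (a' k : ℤ) * r k :=
      Finset.sum_congr rfl (fun k hk => by rw [heqk k hk])
    have hq : q = (a' 0 : ℤ) := by
      have hr0' : (r 0 : ℤ) ≠ 0 := by exact_mod_cast hr0.ne'
      have : q * r 0 = (a' 0 : ℤ) * r 0 := by linarith [hveq, hSS]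
      exact mul_right_cancel₀ hr0' this
    rw [hq]
    exact Int.natCast_nonneg _
  · intro hq
    refine ⟨q.toNat * r 0 + ∑ k ∈ Icc 1 h, a k * r k, ?_, ?_⟩
    · have hmul : ∀ (n x : ℕ), x ∈ AddSubmonoid.closure (r '' Set.Iic h) →
          n * x ∈ AddSubmonoid.closure (r '' Set.Iic h) := by
        intro n x hx
        simpa [nsmul_eq_mul] using AddSubmonoid.nsmul_mem _ hx n
      refine AddSubmonoid.add_mem _ ?_ ?_
      · exact hmul _ _ (AddSubmonoid.subset_closure ⟨0, Nat.zero_le _, rfl⟩)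
      · refine AddSubmonoid.sum_mem _ (fun k hk => ?_)
        have := Finset.mem_Icc.mp hk
        exact hmul _ _ (AddSubmonoid.subset_closure ⟨k, this.2, rfl⟩)
    · push_cast
      rw [Int.toNat_of_nonneg hq]


/-- The numerical semigroup `Γ = ⟨r_0, …, r_h⟩` generated by a free sequence is
*symmetric*: with `N = (Σ_{k=1}^h (e_k − 1) r_k) − r_0` (its Frobenius number), an
integer `z` lies in `Γ` if and only if `N − z` does not. -/
theorem free_sequence_symmetric (h : ℕ) (r d : ℕ → ℕ)
    (hfree : IsFreeSeq h r d) (N : ℤ)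
    (hN : N = (∑ k ∈ Finset.Icc 1 h, (((d k / d (k + 1) : ℕ) : ℤ) - 1) * (r k : ℤ))
      - (r 0 : ℤ)) :
    ∀ z : ℤ, (∃ v ∈ AddSubmonoid.closure (r '' Set.Iic h), (v : ℤ) = z) ↔
      ¬ ∃ v ∈ AddSubmonoid.closure (r '' Set.Iic h), (v : ℤ) = N - z := by

  intro z
  have hone : (d (h+1) : ℤ) ∣ z := by rw [hfree.2.2.2.1]; exact one_dvd z
  obtain ⟨a, ha, hdvd⟩ := surj_lemma hfree h le_rfl z hone
  rw [hfree.2.1] at hdvd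
  obtain ⟨q, hq⟩ := hdvd
  have hz : z = q * r 0 + ∑ k ∈ Icc 1 h, (a k : ℤ) * r k := by linear_combination hq
  set b : ℕ → ℕ := fun k => d k / d (k+1) - 1 - a k with hbdef
  have hb : ∀ k ∈ Icc 1 h, b k < d k / d (k+1) := by
    intro k hk
    have h1 := ha k hk
    have h2 := e_pos hfree k (Finset.mem_Icc.mp hk).1 (Finset.mem_Icc.mp hk).2
    simp only [hbdef]
    omega
  have hbsum : ∑ k ∈ Icc 1 h, (b k : ℤ) * r k
      = (∑ k ∈ Finset.Icc 1 h, (((d k / d (k + 1) : ℕ) : ℤ) - 1) * (r k : ℤ))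
        - ∑ k ∈ Icc 1 h, (a k : ℤ) * r k := by
    rw [← Finset.sum_sub_distrib]
    refine Finset.sum_congr rfl (fun k hk => ?_)
    have h1 := ha k hk
    have h2 : ((d k / d (k+1) - 1 - a k : ℕ) : ℤ)
        = ((d k / d (k+1) : ℕ) : ℤ) - 1 - (a k : ℤ) := by omega
    simp only [hbdef]
    rw [h2]
    ring
  have hNz : N - z = (-1 - q) * r 0 + ∑ k ∈ Icc 1 h, (b k : ℤ) * r k := by
    rw [hN, hz, hbsum]; ring
  have e1 := mem_iff hfree a ha q
  have e2 := mem_iff hfree b hb (-1 - q)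
  rw [← hz] at e1
  rw [← hNz] at e2
  rw [e1, e2]
  omega
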